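/- Let L₁ and L₂ be two dual-Lip-norms on the same von Neumann algebra M, and J a seminorm on M ⊕ M restricting to L₁ on M⊕{0} and L₂ on {0}⊕M. Then dist_{qGH*}((M, L₁), (M, L₂)) ≤ sup{ J(x, −x) : x ∈ M, ‖x‖ = 1 }. -/

import Mathlib

open Filter Topology

/-- The topology induced by a (semi)norm-like function `L`: the topology generated by the
open balls of the translation-invariant (pseudo)metric `d(x,y) = L (x - y)`. -/
def ballTopology {E : Type*} [AddGroup E] (L : E → ℝ) : TopologicalSpace E :=
  TopologicalSpace.generateFrom {s | ∃ c r, s = {x | L (x - c) < r}}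

/-- A dual-Lip-norm on (the underlying space of) a von Neumann algebra `M`: a norm making the
unit ball of `M` compact in the induced topology (equivalently, inducing the weak* topology on
bounded subsets). -/
def IsDualLipNorm {M : Type*} [NormedRing M] [NormedAlgebra ℂ M] (L : M → ℝ) : Prop :=
  (∀ x, 0 ≤ L x) ∧ (∀ x y, L (x + y) ≤ L x + L y) ∧
    (∀ (c : ℂ) (x : M), L (c • x) = ‖c‖ * L x) ∧ (∀ x, L x = 0 → x = 0) ∧
    @IsCompact M (ballTopology L) {x | ‖x‖ ≤ 1}

/-- Positivity in a `*`-ring: `a` is positive iff it is of the form `b* b`. -/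
def IsPos {A : Type*} [Ring A] [StarRing A] (a : A) : Prop := ∃ b, a = star b * b

/-- The positive part `X_M` of the unit ball of the 2×2 matrices over `A`:
the elements `a` with `0 ≤ a ≤ 1`. -/
def posUnitBall (A : Type*) [Ring A] [StarRing A] : Set (Matrix (Fin 2) (Fin 2) A) :=
  {a | IsPos a ∧ IsPos (1 - a)}

/-- The unit ball of the 2×2 matrices over a unital C*-algebra `A`, characterized
algebraically: `‖a‖ ≤ 1` iff `1 - a* a ≥ 0`. -/
def matUnitBall (A : Type*) [Ring A] [StarRing A] : Set (Matrix (Fin 2) (Fin 2) A) :=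
  {a | IsPos (1 - star a * a)}

/-- The lift of a (semi)norm to 2×2 matrices: the max over the entries. -/
noncomputable def matLift {A : Type*} (L : A → ℝ) (a : Matrix (Fin 2) (Fin 2) A) : ℝ :=
  max (max (L (a 0 0)) (L (a 0 1))) (max (L (a 1 0)) (L (a 1 1)))

/-- The Hausdorff distance between two subsets w.r.t. a seminorm `L`. -/
noncomputable def seminormHausdorffDist {Z : Type*} [AddGroup Z] (L : Z → ℝ)
    (A B : Set Z) : ℝ :=
  max (⨆ x : A, ⨅ y : B, L ((x : Z) - (y : Z))) (⨆ y : B, ⨅ x : A, L ((x : Z) - (y : Z)))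

/-- The set `𝓛(M,N)` of admissible seminorms on `M ⊕ N`, i.e. seminorms restricting to `LM` on
`M ⊕ {0}` and to `LN` on `{0} ⊕ N`. -/
def admissible {M N : Type*} [Ring M] [Algebra ℂ M] [Ring N] [Algebra ℂ N]
    (LM : M → ℝ) (LN : N → ℝ) : Set (M × N → ℝ) :=
  {L | (∀ z, 0 ≤ L z) ∧ (∀ z w, L (z + w) ≤ L z + L w) ∧
    (∀ (c : ℂ) (z : M × N), L (c • z) = ‖c‖ * L z) ∧
    (∀ x : M, L (x, 0) = LM x) ∧ (∀ y : N, L (0, y) = LN y)}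

/-- The entrywise embedding of `M₂(M)` into `M₂(M ⊕ N)`. -/
def embL {M N : Type*} [Zero N] (a : Matrix (Fin 2) (Fin 2) M) :
    Matrix (Fin 2) (Fin 2) (M × N) := a.map fun x => (x, 0)

/-- The entrywise embedding of `M₂(N)` into `M₂(M ⊕ N)`. -/
def embR {M N : Type*} [Zero M] (b : Matrix (Fin 2) (Fin 2) N) :
    Matrix (Fin 2) (Fin 2) (M × N) := b.map fun y => ((0 : M), y)

/-- The dual quantum Gromov–Hausdorff distance between `(M, LM)` and `(N, LN)`: the infimum,
over admissible seminorms `L` on `M ⊕ N`, of the Hausdorff distance w.r.t. the lift of `L` to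
2×2 matrices between the positive parts of the unit balls of `M₂(M)` and `M₂(N)`. -/
noncomputable def distqGH {M N : Type*} [NormedRing M] [NormedAlgebra ℂ M] [StarRing M]
    [NormedRing N] [NormedAlgebra ℂ N] [StarRing N] (LM : M → ℝ) (LN : N → ℝ) : ℝ :=
  sInf {d | ∃ L ∈ admissible LM LN,
    d = seminormHausdorffDist (matLift L)
      (embL (N := N) '' posUnitBall M) (embR (M := M) '' posUnitBall N)}

/-- The radius of a Lip-von Neumann algebra: the sup of the Lip-norm over the unit ball. -/
noncomputable def lipRadius {M : Type*} [NormedRing M] (L : M → ℝ) : ℝ :=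
  sSup {r | ∃ x : M, ‖x‖ ≤ 1 ∧ r = L x}

section Aux

variable {M : Type*} [NormedRing M] [NormedAlgebra ℂ M]

lemma lip_zero (L : M → ℝ) (hL : ∀ (c : ℂ) (x : M), L (c • x) = ‖c‖ * L x) : L 0 = 0 := by
  have := hL 0 0
  simpa using this

lemma lip_bounded (L : M → ℝ) (h : IsDualLipNorm L) :
    ∃ C, ∀ x : M, ‖x‖ ≤ 1 → L x ≤ C := by
  obtain ⟨h0, hadd, hsmul, -, hcomp⟩ := h
  letI T := ballTopology L
  have hneg : ∀ x : M, L (-x) = L x := by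
    intro x; have := hsmul (-1) x; simpa using this
  have hopen : ∀ (c : M) (r : ℝ), @IsOpen M T {x | L (x - c) < r} := fun c r =>
    TopologicalSpace.GenerateOpen.basic _ ⟨c, r, rfl⟩
  have hcont : @Continuous M ℝ T _ L := by
    rw [@continuous_iff_continuousAt M ℝ T _ L]
    intro x
    rw [ContinuousAt, Metric.tendsto_nhds]
    intro ε hε
    have hmem : x ∈ {y : M | L (y - x) < ε} := by
      simp [lip_zero L hsmul, hε]
    filter_upwards [(hopen x ε).mem_nhds hmem] with y hy
    rw [Real.dist_eq, abs_sub_lt_iff]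
    constructor
    · have := hadd (y - x) x
      simp only [sub_add_cancel] at this
      linarith [hy]
    · have := hadd (x - y) y
      simp only [sub_add_cancel] at this
      have hxy : L (x - y) = L (y - x) := by
        rw [← hneg (x - y)]; congr 1; abel
      linarith [hy]
  have himg : IsCompact (L '' {x : M | ‖x‖ ≤ 1}) := hcomp.image hcont
  obtain ⟨C, hC⟩ := himg.bddAbove
  exact ⟨C, fun x hx => hC ⟨x, hx, rfl⟩⟩

end Aux

section Entry

variable {M : Type*} [NormedRing M] [NormedAlgebra ℂ M] [StarRing M] [CStarRing M]
  [StarModule ℂ M] [CompleteSpace M]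

lemma entry_bound (a : Matrix (Fin 2) (Fin 2) M) (ha : a ∈ posUnitBall M)
    (i j : Fin 2) : ‖a i j‖ ≤ 1 := by
  letI : CStarAlgebra M :=
    { ‹NormedRing M›, ‹StarRing M›, ‹CompleteSpace M›, ‹CStarRing M›, ‹NormedAlgebra ℂ M›,
      ‹StarModule ℂ M› with }
  letI : PartialOrder M := CStarAlgebra.spectralOrder M
  haveI : StarOrderedRing M := CStarAlgebra.spectralOrderedRing M
  obtain ⟨⟨b, hb⟩, ⟨c, hc⟩⟩ := ha
  have hentry : ∀ i j, a i j = ∑ k, star (b k i) * b k j := by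
    intro i j
    rw [hb]
    simp [Matrix.mul_apply, Matrix.star_apply]
  have hcentry : ∀ i, (1 : M) - a i i = ∑ k, star (c k i) * c k i := by
    intro i
    have := congrArg (fun m => m i i) hc
    simpa [Matrix.sub_apply, Matrix.mul_apply, Matrix.star_apply, Matrix.one_apply_eq] using this
  have hdiagpos : ∀ i, (0 : M) ≤ a i i := by
    intro i
    rw [hentry i i]
    exact Finset.sum_nonneg fun k _ => star_mul_self_nonneg _
  have hdiag1 : ∀ i, a i i ≤ 1 := by
    intro i
    have h1 : (0 : M) ≤ 1 - a i i := by
      rw [hcentry i]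
      exact Finset.sum_nonneg fun k _ => star_mul_self_nonneg _
    exact sub_nonneg.mp h1
  have hdiagnorm : ∀ i, ‖a i i‖ ≤ 1 := fun i =>
    (CStarAlgebra.norm_le_one_iff_of_nonneg _ (hdiagpos i)).mpr (hdiag1 i)
  have hinner : ∀ i j,
      (inner M ((WithCStarModule.equiv M _).symm (fun k => star (b k j)) : WithCStarModule M (Fin 2 → M))
        ((WithCStarModule.equiv M _).symm (fun k => star (b k i))) : M) = a i j := by
    intro i j
    rw [WithCStarModule.pi_inner, hentry]
    refine Finset.sum_congr rfl fun k _ => ?_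
    show star (b k i) * star (star (b k j)) = _
    rw [star_star]
  have hnorm : ∀ i,
      ‖((WithCStarModule.equiv M _).symm (fun k => star (b k i)) : WithCStarModule M (Fin 2 → M))‖ ≤ 1 := by
    intro i
    rw [CStarModule.norm_eq_sqrt_norm_inner_self (A := M), hinner i i]
    exact Real.sqrt_le_one.mpr (hdiagnorm i)
  calc ‖a i j‖
      = ‖(inner M ((WithCStarModule.equiv M _).symm (fun k => star (b k j)) : WithCStarModule M (Fin 2 → M))
        ((WithCStarModule.equiv M _).symm (fun k => star (b k i))) : M)‖ := by rw [hinner]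
    _ ≤ _ * _ := CStarModule.norm_inner_le _
    _ ≤ 1 * 1 := mul_le_mul (hnorm j) (hnorm i) (norm_nonneg _) zero_le_one
    _ = 1 := by ring

end Entry

theorem stmt13aux {M : Type*}
    [NormedRing M] [NormedAlgebra ℂ M] [StarRing M] [CStarRing M] [StarModule ℂ M]
    [CompleteSpace M]
    (L₁ L₂ : M → ℝ) (h₁ : IsDualLipNorm L₁) (h₂ : IsDualLipNorm L₂)
    (J : M × M → ℝ) (hJ : J ∈ admissible L₁ L₂) :
    distqGH L₁ L₂ ≤ sSup {r | ∃ x : M, ‖x‖ = 1 ∧ r = J (x, -x)} := by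
  obtain ⟨hJ0, hJadd, hJsmul, hJ1, hJ2⟩ := id hJ
  set S := sSup {r | ∃ x : M, ‖x‖ = 1 ∧ r = J (x, -x)} with hSdef
  obtain ⟨C₁, hC₁⟩ := lip_bounded L₁ h₁
  obtain ⟨C₂, hC₂⟩ := lip_bounded L₂ h₂
  have hSbdd : BddAbove {r | ∃ x : M, ‖x‖ = 1 ∧ r = J (x, -x)} := by
    refine ⟨C₁ + C₂, ?_⟩
    rintro r ⟨x, hx, rfl⟩
    have hsplit : ((x, -x) : M × M) = (x, 0) + (0, -x) := by simp
    calc J (x, -x) ≤ J (x, 0) + J (0, -x) := by rw [hsplit]; exact hJadd _ _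
      _ = L₁ x + L₂ (-x) := by rw [hJ1, hJ2]
      _ ≤ C₁ + C₂ := add_le_add (hC₁ x hx.le) (hC₂ (-x) (by simpa using hx.le))
  have hSnn : 0 ≤ S := Real.sSup_nonneg (by rintro r ⟨x, hx, rfl⟩; exact hJ0 _)
  have key : ∀ z : M, ‖z‖ ≤ 1 → J (z, -z) ≤ S := by
    intro z hz
    rcases eq_or_ne z 0 with rfl | hz0
    · have h0 : J ((0 : M), -(0 : M)) = 0 := by
        have := hJsmul 0 ((0 : M), (0 : M))
        rw [neg_zero]; simp at this; exact this
      rw [h0]; exact hSnn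
    · set x : M := ((‖z‖⁻¹ : ℝ) : ℂ) • z with hxdef
      have hzpos : (0 : ℝ) < ‖z‖ := norm_pos_iff.mpr hz0
      have hxnorm : ‖x‖ = 1 := by
        rw [hxdef, norm_smul]
        simp [abs_of_pos (inv_pos.mpr hzpos), inv_mul_cancel₀ hzpos.ne']
      have hsc : ((‖z‖ : ℝ) : ℂ) • ((x, -x) : M × M) = (z, -z) := by
        have hzz : ((‖z‖ : ℝ) : ℂ) • x = z := by
          rw [hxdef, smul_smul, ← Complex.ofReal_mul, mul_inv_cancel₀ hzpos.ne']
          simp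
        rw [Prod.smul_mk, smul_neg, hzz]
      calc J (z, -z) = ‖((‖z‖ : ℝ) : ℂ)‖ * J (x, -x) := by rw [← hsc, hJsmul]
        _ = ‖z‖ * J (x, -x) := by simp [abs_of_pos hzpos]
        _ ≤ 1 * J (x, -x) := mul_le_mul_of_nonneg_right hz (hJ0 _)
        _ = J (x, -x) := one_mul _
        _ ≤ S := le_csSup hSbdd ⟨x, hxnorm, rfl⟩
  have hdiff : ∀ (a : Matrix (Fin 2) (Fin 2) M) (i j : Fin 2),
      (embL (N := M) a - embR (M := M) a) i j = (a i j, -(a i j)) := by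
    intro a i j
    simp [embL, embR, Matrix.sub_apply, Prod.ext_iff]
  have hmat : ∀ a ∈ posUnitBall M,
      matLift J (embL (N := M) a - embR (M := M) a) ≤ S := by
    intro a ha
    rw [matLift, hdiff, hdiff, hdiff, hdiff]
    exact max_le (max_le (key _ (entry_bound a ha 0 0)) (key _ (entry_bound a ha 0 1)))
      (max_le (key _ (entry_bound a ha 1 0)) (key _ (entry_bound a ha 1 1)))
  have hLnn : ∀ m, 0 ≤ matLift J m := by
    intro m
    rw [matLift]
    exact le_max_of_le_left (le_max_of_le_left (hJ0 _))
  have hd : seminormHausdorffDist (matLift J)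
      (embL (N := M) '' posUnitBall M) (embR (M := M) '' posUnitBall M) ≤ S := by
    rw [seminormHausdorffDist]
    apply max_le
    · refine Real.iSup_le ?_ hSnn
      rintro ⟨x, a, ha, rfl⟩
      refine le_trans (ciInf_le ⟨0, ?_⟩ (⟨embR a, ⟨a, ha, rfl⟩⟩ :
        (embR (M := M) '' posUnitBall M))) (hmat a ha)
      rintro r ⟨y, rfl⟩
      exact hLnn _
    · refine Real.iSup_le ?_ hSnn
      rintro ⟨y, a, ha, rfl⟩
      refine le_trans (ciInf_le ⟨0, ?_⟩ (⟨embL a, ⟨a, ha, rfl⟩⟩ :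
        (embL (N := M) '' posUnitBall M))) (hmat a ha)
      rintro r ⟨x, rfl⟩
      exact hLnn _
  refine le_trans (csInf_le ?_ ⟨J, hJ, rfl⟩) hd
  refine ⟨0, ?_⟩
  rintro d ⟨L, hL, rfl⟩
  have hLnn' : ∀ m, 0 ≤ matLift L m := by
    intro m
    rw [matLift]
    exact le_max_of_le_left (le_max_of_le_left (hL.1 _))
  exact le_max_of_le_left (Real.iSup_nonneg fun x => Real.iInf_nonneg fun y => hLnn' _)


/-- Let `L₁`, `L₂` be dual-Lip-norms on the same von Neumann algebra `M`,
and `J` an admissible seminorm on `M ⊕ M` restricting to `L₁` and `L₂`. Then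
`dist_{qGH*}((M,L₁),(M,L₂)) ≤ sup { J(x,−x) : ‖x‖ = 1 }`. -/
theorem stmt13 {M : Type*}
    [NormedRing M] [NormedAlgebra ℂ M] [StarRing M] [CStarRing M] [StarModule ℂ M]
    [CompleteSpace M]
    (L₁ L₂ : M → ℝ) (h₁ : IsDualLipNorm L₁) (h₂ : IsDualLipNorm L₂)
    (J : M × M → ℝ) (hJ : J ∈ admissible L₁ L₂) :
    distqGH L₁ L₂ ≤ sSup {r | ∃ x : M, ‖x‖ = 1 ∧ r = J (x, -x)} := by
  exact stmt13aux L₁ L₂ h₁ h₂ J hJ
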